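/- Let λ be a partition of weight w with p-core whose abacus (with a fixed number of beads) has all beads pushed up maximally. If w ≤ 3 and the p-core is empty (all runners have the same number of beads, at least w, pushed to the top), then for every residue r, λ has at most one removable r-node. -/

import Mathlib

/-- The `p`-weight of an abacus configuration `S` on a `p`-runner abacus
(positions `0`-indexed: position `m` is on runner `m % p` at level `m / p`):
the number of one-step downward bead moves from the pushed-up configuration. -/
def abacusWeight (p : ℕ) (S : Finset ℕ) : ℤ :=
  (∑ m ∈ S, (m / p : ℤ)) -
    ∑ r ∈ Finset.range p, ((S.filter (fun m => m % p = r)).card.choose 2 : ℤ)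

/-- The total "gap count" of the level set of runner `s`: for each bead, the number of
empty levels below it on its runner. -/
def runnerGap (p : ℕ) (S : Finset ℕ) (s : ℕ) : ℕ :=
  ∑ t ∈ (S.filter (fun m => m % p = s)).image (fun m => m / p),
    ((Finset.range t).filter
      (fun j => j ∉ (S.filter (fun m => m % p = s)).image (fun m => m / p))).card

lemma pairSum (T : Finset ℕ) :
    ∑ t ∈ T, ((Finset.range t).filter (fun j => j ∈ T)).card = T.card.choose 2 := by
  induction T using Finset.strongInduction with
  | _ T ih =>
    rcases T.eq_empty_or_nonempty with rfl | hne
    · simp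
    · have hMem : T.max' hne ∈ T := T.max'_mem hne
      set M := T.max' hne with hM
      have key : ∑ t ∈ T.erase M, ((Finset.range t).filter (fun j => j ∈ T)).card
          = (T.erase M).card.choose 2 := by
        rw [← ih (T.erase M) (Finset.erase_ssubset hMem)]
        apply Finset.sum_congr rfl
        intro t ht
        congr 1
        apply Finset.filter_congr
        intro j hj
        simp only [Finset.mem_range] at hj
        have htM : t ≤ M := T.le_max' t (Finset.mem_of_mem_erase ht)
        have hjM : j ≠ M := by omega
        simp [Finset.mem_erase, hjM]
      have hfM : ((Finset.range M).filter (fun j => j ∈ T)).card = T.card - 1 := by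
        have he : (Finset.range M).filter (fun j => j ∈ T) = T.erase M := by
          ext j
          simp only [Finset.mem_filter, Finset.mem_range, Finset.mem_erase]
          constructor
          · rintro ⟨hj, hjT⟩; exact ⟨by omega, hjT⟩
          · rintro ⟨hj, hjT⟩
            have := T.le_max' j hjT
            exact ⟨by omega, hjT⟩
        rw [he, Finset.card_erase_of_mem hMem]
      have hsplit := Finset.sum_erase_add T
        (fun t => ((Finset.range t).filter (fun j => j ∈ T)).card) hMem
      obtain ⟨k, hk⟩ : ∃ k, T.card = k + 1 := ⟨T.card - 1, by
        have : 0 < T.card := Finset.card_pos.mpr hne; omega⟩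
      have hce : (T.erase M).card = k := by
        rw [Finset.card_erase_of_mem hMem, hk]
        omega
      have hch : (k + 1).choose 2 = k.choose 2 + k := by
        simp [Nat.choose_succ_succ, Nat.choose_one_right]
        omega
      rw [key, hfM, hce] at hsplit
      rw [← hsplit, hk, hch]
      omega

lemma sum_eq_choose_add_gap (T : Finset ℕ) :
    ∑ t ∈ T, t
      = T.card.choose 2 + ∑ t ∈ T, ((Finset.range t).filter (fun j => j ∉ T)).card := by
  have h : ∑ t ∈ T, t = ∑ t ∈ T, (((Finset.range t).filter (fun j => j ∈ T)).card
      + ((Finset.range t).filter (fun j => j ∉ T)).card) := by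
    apply Finset.sum_congr rfl
    intro t _
    have := Finset.card_filter_add_card_filter_not
      (s := Finset.range t) (p := fun j => j ∈ T)
    simp only [Finset.card_range] at this
    omega
  rw [h, Finset.sum_add_distrib, pairSum]

lemma contain_bound (T : Finset ℕ) (a b : ℕ) (ha : a ∈ T) (hb : b ∈ T)
    (hab : a < b) :
    a + 2 ≤ ((Finset.range a).filter (fun j => j ∉ T)).card + T.card ∧
      b + 1 ≤ ((Finset.range b).filter (fun j => j ∉ T)).card + T.card := by
  constructor
  · have hsub : insert a (insert b ((Finset.range a).filter (fun j => j ∈ T))) ⊆ T := by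
      intro x hx
      simp only [Finset.mem_insert, Finset.mem_filter] at hx
      rcases hx with rfl | rfl | ⟨_, h⟩
      · exact ha
      · exact hb
      · exact h
    have h1 : b ∉ (Finset.range a).filter (fun j => j ∈ T) := by
      simp only [Finset.mem_filter, Finset.mem_range]
      intro h; omega
    have h2 : a ∉ insert b ((Finset.range a).filter (fun j => j ∈ T)) := by
      simp only [Finset.mem_insert, Finset.mem_filter, Finset.mem_range]
      intro h; rcases h with h | ⟨h, _⟩ <;> omega
    have hcard := Finset.card_le_card hsub
    rw [Finset.card_insert_of_notMem h2, Finset.card_insert_of_notMem h1] at hcard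
    have := Finset.card_filter_add_card_filter_not
      (s := Finset.range a) (p := fun j => j ∈ T)
    simp only [Finset.card_range] at this
    omega
  · have hsub : insert b ((Finset.range b).filter (fun j => j ∈ T)) ⊆ T := by
      intro x hx
      simp only [Finset.mem_insert, Finset.mem_filter] at hx
      rcases hx with rfl | ⟨_, h⟩
      · exact hb
      · exact h
    have h2 : b ∉ (Finset.range b).filter (fun j => j ∈ T) := by
      simp only [Finset.mem_filter, Finset.mem_range]
      intro h; omega
    have hcard := Finset.card_le_card hsub
    rw [Finset.card_insert_of_notMem h2] at hcard
    have := Finset.card_filter_add_card_filter_not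
      (s := Finset.range b) (p := fun j => j ∈ T)
    simp only [Finset.card_range] at this
    omega

lemma contain_sum (T : Finset ℕ) (a b : ℕ) (ha : a ∈ T) (hb : b ∈ T) (hab : a ≠ b) :
    ((Finset.range a).filter (fun j => j ∉ T)).card
      + ((Finset.range b).filter (fun j => j ∉ T)).card
      ≤ ∑ t ∈ T, ((Finset.range t).filter (fun j => j ∉ T)).card := by
  have hsub : ({a, b} : Finset ℕ) ⊆ T := by
    intro x hx
    simp only [Finset.mem_insert, Finset.mem_singleton] at hx
    rcases hx with rfl | rfl <;> assumption
  have h := Finset.sum_le_sum_of_subset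
    (f := fun t => ((Finset.range t).filter (fun j => j ∉ T)).card) hsub
  rwa [Finset.sum_pair hab] at h

lemma avoid_bound (T : Finset ℕ) (w a b : ℕ) (hcard : T.card = w) (ha : a ∉ T)
    (hb : b ∉ T) (hab : a < b) :
    w + w + 1 ≤ (∑ t ∈ T, ((Finset.range t).filter (fun j => j ∉ T)).card) + a + b := by
  have hA : w ≤ (T.filter (fun t => a < t)).card + a := by
    have hsub : T.filter (fun t => ¬ a < t) ⊆ Finset.range a := by
      intro t ht
      simp only [Finset.mem_filter, not_lt] at ht
      have : t ≠ a := fun h => ha (h ▸ ht.1)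
      simp only [Finset.mem_range]
      omega
    have h1 : (T.filter (fun t => ¬ a < t)).card ≤ a := by
      have := Finset.card_le_card hsub
      simpa using this
    have h2 := Finset.card_filter_add_card_filter_not
      (s := T) (p := fun t => a < t)
    omega
  have hB : w + 1 ≤ (T.filter (fun t => b < t)).card + b := by
    have hsub : T.filter (fun t => ¬ b < t) ⊆ (Finset.range b).erase a := by
      intro t ht
      simp only [Finset.mem_filter, not_lt] at ht
      have h1 : t ≠ b := fun h => hb (h ▸ ht.1)
      have h2 : t ≠ a := fun h => ha (h ▸ ht.1)
      simp only [Finset.mem_erase, Finset.mem_range]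
      exact ⟨h2, by omega⟩
    have h1 : (T.filter (fun t => ¬ b < t)).card ≤ b - 1 := by
      have := Finset.card_le_card hsub
      rwa [Finset.card_erase_of_mem (Finset.mem_range.mpr hab), Finset.card_range] at this
    have h2 := Finset.card_filter_add_card_filter_not
      (s := T) (p := fun t => b < t)
    omega
  have hAB : (T.filter (fun t => a < t)).card + (T.filter (fun t => b < t)).card
      ≤ ∑ t ∈ T, ((Finset.range t).filter (fun j => j ∉ T)).card := by
    have hterm : ∀ t ∈ T, (if a < t then 1 else 0) + (if b < t then 1 else 0)
        ≤ ((Finset.range t).filter (fun j => j ∉ T)).card := by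
      intro t ht
      by_cases h1 : a < t <;> by_cases h2 : b < t
      · have : 1 < ((Finset.range t).filter (fun j => j ∉ T)).card := by
          apply Finset.one_lt_card.mpr
          refine ⟨a, ?_, b, ?_, by omega⟩
          · simp only [Finset.mem_filter, Finset.mem_range]; exact ⟨h1, ha⟩
          · simp only [Finset.mem_filter, Finset.mem_range]; exact ⟨h2, hb⟩
        simp only [if_pos h1, if_pos h2]
        omega
      · have : 0 < ((Finset.range t).filter (fun j => j ∉ T)).card := by
          apply Finset.card_pos.mpr
          refine ⟨a, ?_⟩
          simp only [Finset.mem_filter, Finset.mem_range]; exact ⟨h1, ha⟩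
        simp only [if_pos h1, if_neg h2]
        omega
      · have : 0 < ((Finset.range t).filter (fun j => j ∉ T)).card := by
          apply Finset.card_pos.mpr
          refine ⟨b, ?_⟩
          simp only [Finset.mem_filter, Finset.mem_range]; exact ⟨h2, hb⟩
        simp only [if_neg h1, if_pos h2]
        omega
      · simp only [if_neg h1, if_neg h2]
        omega
    calc (T.filter (fun t => a < t)).card + (T.filter (fun t => b < t)).card
        = ∑ t ∈ T, ((if a < t then 1 else 0) + (if b < t then 1 else 0)) := by
          rw [Finset.sum_add_distrib, ← Finset.card_filter, ← Finset.card_filter]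
      _ ≤ _ := Finset.sum_le_sum hterm
  omega

lemma pred_mod (p m : ℕ) (hp : 2 ≤ p) (hm : 0 < m) :
    (m - 1) % p = (if m % p = 0 then p - 1 else m % p - 1) := by
  have hmp : m % p < p := Nat.mod_lt _ (by omega)
  have hp1 : (p - 1) % p = p - 1 := Nat.mod_eq_of_lt (by omega)
  have h1 : (m - 1) % p = (m - 1 + p) % p := (Nat.add_mod_right _ _).symm
  have h2 : m - 1 + p = m + (p - 1) := by omega
  rw [h1, h2, Nat.add_mod, hp1]
  by_cases h : m % p = 0
  · rw [if_pos h, h]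
    simpa using Nat.mod_eq_of_lt (show p - 1 < p by omega)
  · rw [if_neg h]
    have h4 : m % p + (p - 1) = (m % p - 1) + p := by omega
    rw [h4, Nat.add_mod_right, Nat.mod_eq_of_lt (by omega)]

lemma div_lt_div_of_mod_eq (p x y : ℕ) (hp : 0 < p) (hxy : x < y)
    (hmod : x % p = y % p) : x / p < y / p := by
  have h1 := Nat.div_add_mod x p
  have h2 := Nat.div_add_mod y p
  have h3 : p * (x / p) < p * (y / p) := by omega
  exact Nat.lt_of_mul_lt_mul_left h3

/-- If `w ≤ 3` and `λ` (with abacus configuration `S`) lies in the principal block,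
i.e. its `p`-core is empty (every runner carries exactly `w` beads) and its weight
is `w`, then for every residue `r` the partition `λ` has at most one removable
`r`-node, i.e. at most one bead on runner `r` can move one space to the left. -/
theorem at_most_one_removable_of_weight_le_three (p w : ℕ) (S : Finset ℕ)
    (hp : 2 ≤ p) (hw : w ≤ 3)
    (hcounts : ∀ r < p, (S.filter (fun m => m % p = r)).card = w)
    (hweight : abacusWeight p S = (w : ℤ)) :
    ∀ r < p, (S.filter (fun m => m % p = r ∧ 0 < m ∧ m - 1 ∉ S)).card ≤ 1 := by
  intro r hr
  by_contra hcon
  push_neg at hcon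
  obtain ⟨m1, hm1, m2, hm2, hne12⟩ := Finset.one_lt_card.mp hcon
  simp only [Finset.mem_filter] at hm1 hm2
  obtain ⟨hm1S, hm1r, hm1pos, hm1rem⟩ := hm1
  obtain ⟨hm2S, hm2r, hm2pos, hm2rem⟩ := hm2
  have hp0 : 0 < p := by omega
  wlog hlt : m1 < m2 generalizing m1 m2
  · exact this m2 m1 (Ne.symm hne12) hm2S hm2r hm2pos hm2rem
      hm1S hm1r hm1pos hm1rem (by omega)
  -- injectivity of levels on a runner
  have hinj : ∀ s : ℕ, ∀ x ∈ S.filter (fun m => m % p = s),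
      ∀ y ∈ S.filter (fun m => m % p = s), x / p = y / p → x = y := by
    intro s x hx y hy hxy
    simp only [Finset.mem_filter] at hx hy
    have h1 := Nat.div_add_mod x p
    have h2 := Nat.div_add_mod y p
    rw [hxy] at h1
    omega
  have hcardT : ∀ s, s < p →
      ((S.filter (fun m => m % p = s)).image (fun m => m / p)).card = w := by
    intro s hs
    rw [Finset.card_image_of_injOn (fun x hx y hy => hinj s x hx y hy), hcounts s hs]
  have hsumT : ∀ s, s < p → ∑ m ∈ S.filter (fun m => m % p = s), m / p
      = w.choose 2 + runnerGap p S s := by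
    intro s hs
    have h1 : ∑ t ∈ (S.filter (fun m => m % p = s)).image (fun m => m / p), t
        = ∑ m ∈ S.filter (fun m => m % p = s), m / p := Finset.sum_image (hinj s)
    rw [← h1, sum_eq_choose_add_gap, hcardT s hs]
    rfl
  have hfiber : ∑ s ∈ Finset.range p, ∑ m ∈ S.filter (fun m => m % p = s), m / p
      = ∑ m ∈ S, m / p :=
    Finset.sum_fiberwise_of_maps_to (fun m _ => Finset.mem_range.mpr (Nat.mod_lt _ hp0)) _
  have e1 : ∑ m ∈ S, m / p = p * w.choose 2 + ∑ s ∈ Finset.range p, runnerGap p S s := by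
    rw [← hfiber,
      Finset.sum_congr rfl (fun s hs => hsumT s (Finset.mem_range.mp hs)),
      Finset.sum_add_distrib, Finset.sum_const, Finset.card_range, smul_eq_mul]
  have e2 : ∑ s ∈ Finset.range p, ((S.filter (fun m => m % p = s)).card.choose 2 : ℤ)
      = ((p * w.choose 2 : ℕ) : ℤ) := by
    rw [Finset.sum_congr rfl
      (fun s hs => by rw [hcounts s (Finset.mem_range.mp hs)]),
      Finset.sum_const, Finset.card_range, nsmul_eq_mul]
    push_cast
    ring
  have e3 : (∑ m ∈ S, (m / p : ℤ)) = ((∑ m ∈ S, m / p : ℕ) : ℤ) := by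
    push_cast
    rfl
  have hGw : ∑ s ∈ Finset.range p, runnerGap p S s = w := by
    have h := hweight
    unfold abacusWeight at h
    rw [e3, e2, e1] at h
    omega
  -- the two removable beads
  have hab : m1 / p < m2 / p :=
    div_lt_div_of_mod_eq p m1 m2 hp0 hlt (by rw [hm1r, hm2r])
  have hmod1 := pred_mod p m1 hp hm1pos
  have hmod2 := pred_mod p m2 hp hm2pos
  have hr'2 : (m2 - 1) % p = (m1 - 1) % p := by rw [hmod2, hm2r, hmod1, hm1r]
  have hr'p : (m1 - 1) % p < p := Nat.mod_lt _ hp0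
  have hr'r : (m1 - 1) % p ≠ r := by
    rw [hmod1, hm1r]
    by_cases h : r = 0
    · simp only [if_pos h]
      omega
    · simp only [if_neg h]
      omega
  have ha'b' : (m1 - 1) / p < (m2 - 1) / p :=
    div_lt_div_of_mod_eq p (m1 - 1) (m2 - 1) hp0 (by omega) hr'2.symm
  have ha'a : (m1 - 1) / p ≤ m1 / p := Nat.div_le_div_right (by omega)
  have hb'b : (m2 - 1) / p ≤ m2 / p := Nat.div_le_div_right (by omega)
  have haT : m1 / p ∈ (S.filter (fun m => m % p = r)).image (fun m => m / p) :=
    Finset.mem_image.mpr ⟨m1, Finset.mem_filter.mpr ⟨hm1S, hm1r⟩, rfl⟩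
  have hbT : m2 / p ∈ (S.filter (fun m => m % p = r)).image (fun m => m / p) :=
    Finset.mem_image.mpr ⟨m2, Finset.mem_filter.mpr ⟨hm2S, hm2r⟩, rfl⟩
  have ha'T : (m1 - 1) / p ∉
      (S.filter (fun m => m % p = (m1 - 1) % p)).image (fun m => m / p) := by
    intro hmem
    obtain ⟨m, hm, hdiv⟩ := Finset.mem_image.mp hmem
    simp only [Finset.mem_filter] at hm
    have h1 := Nat.div_add_mod m p
    have h2 := Nat.div_add_mod (m1 - 1) p
    rw [hdiv, hm.2] at h1
    have : m = m1 - 1 := by omega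
    exact hm1rem (this ▸ hm.1)
  have hb'T : (m2 - 1) / p ∉
      (S.filter (fun m => m % p = (m1 - 1) % p)).image (fun m => m / p) := by
    intro hmem
    obtain ⟨m, hm, hdiv⟩ := Finset.mem_image.mp hmem
    simp only [Finset.mem_filter] at hm
    have h1 := Nat.div_add_mod m p
    have h2 := Nat.div_add_mod (m2 - 1) p
    rw [hdiv, hm.2] at h1
    rw [hr'2] at h2
    have : m = m2 - 1 := by omega
    exact hm2rem (this ▸ hm.1)
  obtain ⟨hA1, hA2⟩ := contain_bound _ (m1 / p) (m2 / p) haT hbT hab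
  rw [hcardT r hr] at hA1 hA2
  have hsumr :
      ((Finset.range (m1 / p)).filter
          (fun j => j ∉ (S.filter (fun m => m % p = r)).image (fun m => m / p))).card
        + ((Finset.range (m2 / p)).filter
          (fun j => j ∉ (S.filter (fun m => m % p = r)).image (fun m => m / p))).card
        ≤ runnerGap p S r :=
    contain_sum _ (m1 / p) (m2 / p) haT hbT (by omega)
  have havoid : w + w + 1 ≤ runnerGap p S ((m1 - 1) % p) + (m1 - 1) / p + (m2 - 1) / p :=
    avoid_bound _ w ((m1 - 1) / p) ((m2 - 1) / p)
      (hcardT ((m1 - 1) % p) hr'p) ha'T hb'T ha'b'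
  have hpair : runnerGap p S r + runnerGap p S ((m1 - 1) % p) ≤ w := by
    have hsub : ({r, (m1 - 1) % p} : Finset ℕ) ⊆ Finset.range p := by
      intro x hx
      simp only [Finset.mem_insert, Finset.mem_singleton] at hx
      rcases hx with rfl | rfl
      · exact Finset.mem_range.mpr hr
      · exact Finset.mem_range.mpr hr'p
    calc runnerGap p S r + runnerGap p S ((m1 - 1) % p)
        = ∑ s ∈ ({r, (m1 - 1) % p} : Finset ℕ), runnerGap p S s :=
          (Finset.sum_pair (Ne.symm hr'r)).symm
      _ ≤ ∑ s ∈ Finset.range p, runnerGap p S s := Finset.sum_le_sum_of_subset hsub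
      _ = w := hGw
  omega
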